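/- Let P = (n_1 ≥ ... ≥ n_k) and P' be partitions of d, and suppose P is a strict refinement of P' (P < P'). Then dim Hom_{S_d}(Ind_{S_P'}^{S_d} 1, Ind_{S_P}^{S_d} 1) ≥ 1, and there exists an irreducible representation of S_d occurring in Ind_{S_P}^{S_d} 1 but not in Ind_{S_P'}^{S_d} 1. -/

import Mathlib

/-- Words of length `d` in `n` letters: the standard basis of `E^{⊗d}` for `E = ℂⁿ`
consists of the pure tensors `e_{w 1} ⊗ ... ⊗ e_{w d}` for words `w`. -/
def Word (d n : ℕ) : Type := Fin d → Fin n

lemma card_filter_comp {d k : ℕ} (f : Fin d → Fin k) (e : Equiv.Perm (Fin d)) (i : Fin k) :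
    (Finset.univ.filter fun x => f (e x) = i).card =
      (Finset.univ.filter fun x => f x = i).card := by
  apply Finset.card_bij (fun x _ => e x)
  · intro a ha; simp only [Finset.mem_filter, Finset.mem_univ, true_and] at ha ⊢; exact ha
  · intro a _ b _ h; exact e.injective h
  · intro b hb
    refine ⟨e.symm b, ?_, by simp⟩
    simp only [Finset.mem_filter, Finset.mem_univ, true_and] at hb ⊢
    rw [Equiv.apply_symm_apply]; exact hb

/-- `S_d` acts on words by permuting the positions (tensor factors). -/
instance (d n : ℕ) : MulAction (Equiv.Perm (Fin d)) (Word d n) where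
  smul σ w := (w : Fin d → Fin n) ∘ ⇑σ⁻¹
  one_smul w := by
    funext i; show w ((1 : Equiv.Perm (Fin d))⁻¹ i) = w i; simp
  mul_smul σ τ w := by
    funext i; show w ((σ * τ)⁻¹ i) = w (τ⁻¹ (σ⁻¹ i)); simp [Equiv.Perm.mul_apply]

/-- The permutation representation on complex-valued functions on a `G`-set `X`:
`(g • f) x = f (g⁻¹ • x)`. For `X` the set of words this is `E^{⊗d}`, and for `X` a set of
cosets this is an induced representation `Ind 1`. -/
noncomputable def permActionRep (G : Type) [Group G] (X : Type) [MulAction G X] :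
    Representation ℂ G (X → ℂ) where
  toFun g := LinearMap.funLeft ℂ ℂ (fun x => g⁻¹ • x)
  map_one' := by
    ext f x
    simp
  map_mul' g h := by
    ext f x
    simp [Module.End.mul_apply, mul_smul]

/-- The permutation representation of `S_d` on `E^{⊗d}` (for `E = ℂⁿ`), permuting the
tensor factors of the basis of pure tensors indexed by words. -/
noncomputable def wordRep (n d : ℕ) :
    Representation ℂ (Equiv.Perm (Fin d)) (Word d n → ℂ) :=
  permActionRep (Equiv.Perm (Fin d)) (Word d n)

/-- Surjections `{1,...,d} → {1,...,k}` with fibre sizes prescribed by a composition `P`;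
the permutation action of `S_d` on this set realizes `Ind_{S_P}^{S_d} 1`. -/
def PTab (d k : ℕ) (P : Fin k → ℕ) : Type :=
  {f : Fin d → Fin k // ∀ i, (Finset.univ.filter fun x => f x = i).card = P i}

instance (d k : ℕ) (P : Fin k → ℕ) : MulAction (Equiv.Perm (Fin d)) (PTab d k P) where
  smul σ t := ⟨t.1 ∘ ⇑σ⁻¹, fun i => (card_filter_comp t.1 σ⁻¹ i).trans (t.2 i)⟩
  one_smul t := Subtype.ext (by
    funext i; show t.1 ((1 : Equiv.Perm (Fin d))⁻¹ i) = t.1 i; simp)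
  mul_smul σ τ t := Subtype.ext (by
    funext i; show t.1 ((σ * τ)⁻¹ i) = t.1 (τ⁻¹ (σ⁻¹ i)); simp [Equiv.Perm.mul_apply])

/-- The permutation module `Ind_{S_P}^{S_d} 1` of a composition `P` of `d`. -/
noncomputable def indRep (d k : ℕ) (P : Fin k → ℕ) :
    Representation ℂ (Equiv.Perm (Fin d)) (PTab d k P → ℂ) :=
  permActionRep (Equiv.Perm (Fin d)) (PTab d k P)

/-- The space `Hom_G(V, W)` of `G`-equivariant linear maps between two representations. -/
def EqvHom {G V W : Type} [Group G] [AddCommGroup V] [Module ℂ V]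
    [AddCommGroup W] [Module ℂ W]
    (ρV : Representation ℂ G V) (ρW : Representation ℂ G W) :
    Submodule ℂ (V →ₗ[ℂ] W) where
  carrier := {φ | ∀ g, φ ∘ₗ ρV g = ρW g ∘ₗ φ}
  zero_mem' := fun g => by ext v; simp
  add_mem' := fun {φ ψ} hφ hψ g => by
    ext v
    have h1 := LinearMap.congr_fun (hφ g) v
    have h2 := LinearMap.congr_fun (hψ g) v
    simp only [LinearMap.comp_apply, LinearMap.add_apply] at h1 h2 ⊢
    rw [h1, h2, map_add]
  smul_mem' := fun c φ hφ g => by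
    ext v
    have h := LinearMap.congr_fun (hφ g) v
    simp only [LinearMap.comp_apply, LinearMap.smul_apply] at h ⊢
    rw [h, map_smul]

/-- A representation is irreducible if it is nonzero and has no proper nonzero
invariant subspaces. -/
def Representation.IsIrreducible' {G V : Type} [Group G] [AddCommGroup V] [Module ℂ V]
    (ρ : Representation ℂ G V) : Prop :=
  Nontrivial V ∧ ∀ U : Submodule ℂ V, (∀ g, U.map (ρ g) ≤ U) → U = ⊥ ∨ U = ⊤

/-- `P < P'`: the composition `P` is a strict refinement of `P'`, i.e. grouping the parts
of `P` along some map of index sets yields `P'`, and `P'` has strictly fewer parts. -/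
def IsStrictRefinement {k l : ℕ} (P : Fin k → ℕ) (P' : Fin l → ℕ) : Prop :=
  l < k ∧ ∃ g : Fin k → Fin l, ∀ j, P' j = ∑ i ∈ Finset.univ.filter (fun i => g i = j), P i

namespace S15

open Equiv Equiv.Perm Finset

-- basic apply lemmas
lemma indRep_apply {d k : ℕ} {P : Fin k → ℕ} (σ : Equiv.Perm (Fin d)) (u : PTab d k P → ℂ)
    (t : PTab d k P) : indRep d k P σ u t = u (σ⁻¹ • t) := rfl

lemma smul_coe {d k : ℕ} {P : Fin k → ℕ} (σ : Equiv.Perm (Fin d)) (t : PTab d k P) :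
    (σ⁻¹ • t).1 = t.1 ∘ ⇑σ := by
  show t.1 ∘ ⇑σ⁻¹⁻¹ = t.1 ∘ ⇑σ
  rw [inv_inv]

lemma viaEmbeddingHom_swap {k d : ℕ} (c : Fin k ↪ Fin d) (a b : Fin k) :
    Equiv.Perm.viaEmbeddingHom c (Equiv.swap a b) = Equiv.swap (c a) (c b) := by
  rw [viaEmbeddingHom_apply]
  ext x
  by_cases h : x ∈ Set.range c
  · obtain ⟨y, rfl⟩ := h
    rw [viaEmbedding_apply, c.injective.swap_apply]
  · rw [viaEmbedding_apply_of_notMem _ _ _ h, Equiv.swap_apply_of_ne_of_ne]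
    · exact fun hx => h ⟨a, hx.symm⟩
    · exact fun hx => h ⟨b, hx.symm⟩

/-- The alternating operator over the subgroup of permutations of the image of `c`. -/
noncomputable def altOp (d : ℕ) {k : ℕ} (c : Fin k ↪ Fin d) {m : ℕ} (Q : Fin m → ℕ) :
    (PTab d m Q → ℂ) →ₗ[ℂ] (PTab d m Q → ℂ) :=
  ∑ π : Equiv.Perm (Fin k),
    ((Equiv.Perm.sign π : ℤ) : ℂ) • indRep d m Q (Equiv.Perm.viaEmbeddingHom c π)

lemma altOp_apply (d : ℕ) {k : ℕ} (c : Fin k ↪ Fin d) {m : ℕ} (Q : Fin m → ℕ)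
    (u : PTab d m Q → ℂ) (t : PTab d m Q) :
    altOp d c Q u t
      = ∑ π : Equiv.Perm (Fin k),
          ((Equiv.Perm.sign π : ℤ) : ℂ) * u ((Equiv.Perm.viaEmbeddingHom c π)⁻¹ • t) := by
  simp [altOp, LinearMap.sum_apply, indRep_apply]


lemma altOp_vanish (d : ℕ) {k : ℕ} (c : Fin k ↪ Fin d) {m : ℕ} (Q : Fin m → ℕ)
    (hm : m < k) (u : PTab d m Q → ℂ) : altOp d c Q u = 0 := by
  funext t
  simp only [Pi.zero_apply]
  obtain ⟨a, b, hab, heq⟩ :=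
    Fintype.exists_ne_map_eq_of_card_lt (fun i : Fin k => t.1 (c i)) (by simpa using hm)
  set τ := Equiv.swap a b with hτ
  set Φ := Equiv.Perm.viaEmbeddingHom (β := Fin d) c with hΦ
  have hfix : ∀ π : Equiv.Perm (Fin k), (Φ (τ * π))⁻¹ • t = (Φ π)⁻¹ • t := by
    intro π
    apply Subtype.ext
    rw [smul_coe, smul_coe, map_mul]
    show t.1 ∘ (⇑(Φ τ * Φ π)) = t.1 ∘ ⇑(Φ π)
    rw [Equiv.Perm.coe_mul]
    have hτc : t.1 ∘ ⇑(Φ τ) = t.1 := by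
      funext x
      rw [hΦ, hτ, viaEmbeddingHom_swap]
      show t.1 (Equiv.swap (c a) (c b) x) = t.1 x
      rcases eq_or_ne x (c a) with rfl | hxa
      · rw [Equiv.swap_apply_left]; exact heq.symm
      · rcases eq_or_ne x (c b) with rfl | hxb
        · rw [Equiv.swap_apply_right]; exact heq
        · rw [Equiv.swap_apply_of_ne_of_ne hxa hxb]
    calc t.1 ∘ (⇑(Φ τ) ∘ ⇑(Φ π)) = (t.1 ∘ ⇑(Φ τ)) ∘ ⇑(Φ π) := rfl
      _ = t.1 ∘ ⇑(Φ π) := by rw [hτc]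
  have hsign : ∀ π : Equiv.Perm (Fin k),
      ((Equiv.Perm.sign (τ * π) : ℤ) : ℂ) = -((Equiv.Perm.sign π : ℤ) : ℂ) := by
    intro π
    rw [map_mul, Equiv.Perm.sign_swap hab]
    push_cast
    ring
  set S := altOp d c Q u t with hS
  have h1 : S = -S := by
    rw [hS, altOp_apply]
    rw [← Finset.sum_neg_distrib]
    apply Fintype.sum_equiv (Equiv.mulLeft τ)
    intro π
    show ((Equiv.Perm.sign π : ℤ) : ℂ) * u ((Φ π)⁻¹ • t)
      = -(((Equiv.Perm.sign (τ * π) : ℤ) : ℂ) * u ((Φ (τ * π))⁻¹ • t))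
    rw [hfix, hsign]
    ring
  have h2 : S + S = 0 := by nth_rewrite 1 [h1]; ring
  show S = 0
  linear_combination h2 / 2

instance (d k : ℕ) (P : Fin k → ℕ) : Fintype (PTab d k P) := by
  unfold PTab; infer_instance

instance (d k : ℕ) (P : Fin k → ℕ) : DecidableEq (PTab d k P) := by
  unfold PTab; infer_instance

lemma altOp_seed (d : ℕ) {k : ℕ} {P : Fin k → ℕ} (t₀ : PTab d k P)
    (c : Fin k ↪ Fin d) (hc : ∀ i, t₀.1 (c i) = i) :
    altOp d c P (fun t => if t = t₀ then (1 : ℂ) else 0) t₀ = 1 := by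
  classical
  set Φ := Equiv.Perm.viaEmbeddingHom (β := Fin d) c with hΦ
  have key : ∀ π : Equiv.Perm (Fin k), (Φ π)⁻¹ • t₀ = t₀ ↔ π = 1 := by
    intro π
    constructor
    · intro h
      have h1 : t₀.1 ∘ ⇑(Φ π) = t₀.1 := by
        have := congrArg Subtype.val h
        rwa [smul_coe] at this
      ext i
      have h2 := congrFun h1 (c i)
      have h3 : Φ π (c i) = c (π i) := by
        rw [hΦ]
        show Equiv.Perm.viaEmbedding π c (c i) = c (π i)
        exact Equiv.Perm.viaEmbedding_apply π c i
      simp only [Function.comp_apply, h3, hc] at h2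
      simp [h2]
    · rintro rfl
      simp
  rw [altOp_apply]
  have : ∀ π : Equiv.Perm (Fin k),
      ((Equiv.Perm.sign π : ℤ) : ℂ) * (if (Φ π)⁻¹ • t₀ = t₀ then (1:ℂ) else 0)
        = if π = 1 then 1 else 0 := by
    intro π
    by_cases hπ : π = 1
    · subst hπ
      rw [if_pos ((key 1).mpr rfl), if_pos rfl]
      simp
    · rw [if_neg (fun h => hπ ((key π).mp h)), if_neg hπ, mul_zero]
  rw [Finset.sum_congr rfl fun π _ => this π]
  simp

open scoped InnerProductSpace in
lemma orth_compl (G X : Type) [Group G] [MulAction G X] [Fintype X]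
    (U : Submodule ℂ (X → ℂ)) (hU : ∀ g : G, U.map (permActionRep G X g) ≤ U) :
    ∃ K : Submodule ℂ (X → ℂ),
      (∀ g : G, K.map (permActionRep G X g) ≤ K) ∧ U ⊓ K = ⊥ ∧ U ⊔ K = ⊤ := by
  classical
  let eL : EuclideanSpace ℂ X ≃ₗ[ℂ] (X → ℂ) := WithLp.linearEquiv 2 ℂ (X → ℂ)
  let U₂ : Submodule ℂ (EuclideanSpace ℂ X) := U.map eL.symm.toLinearMap
  have hinner : ∀ u y : X → ℂ,
      ⟪eL.symm u, eL.symm y⟫_ℂ = ∑ x : X, (starRingEnd ℂ) (u x) * y x := by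
    intro u y
    rw [PiLp.inner_apply]
    exact Finset.sum_congr rfl fun x _ => by rw [RCLike.inner_apply, mul_comm]; rfl
  let K : Submodule ℂ (X → ℂ) := (U₂ᗮ).map eL.toLinearMap
  have hUeq : U₂.map eL.toLinearMap = U := by
    ext x
    simp [U₂, Submodule.mem_map_equiv]
  have hcompl : IsCompl U₂ U₂ᗮ := Submodule.isCompl_orthogonal_of_hasOrthogonalProjection
  refine ⟨K, ?_, ?_, ?_⟩
  · intro g
    rintro _ ⟨y, hy, rfl⟩
    simp only [K, Submodule.mem_map] at hy ⊢
    obtain ⟨y₂, hy₂, rfl⟩ := hy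
    refine ⟨eL.symm (permActionRep G X g (eL y₂)), ?_, by simp⟩
    rw [Submodule.mem_orthogonal]
    rintro u₂ hu₂
    obtain ⟨u, hu, rfl⟩ := hu₂
    rw [LinearEquiv.coe_coe, hinner]
    have hrew : ∀ x : X, permActionRep G X g (eL y₂) x = eL y₂ (g⁻¹ • x) := fun x => rfl
    calc ∑ x : X, (starRingEnd ℂ) (u x) * permActionRep G X g (eL y₂) x
        = ∑ x : X, (starRingEnd ℂ) ((permActionRep G X g⁻¹ u) x) * eL y₂ x := by
          apply Fintype.sum_equiv (MulAction.toPerm g⁻¹)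
          intro x
          rw [hrew]
          have h1 : (MulAction.toPerm g⁻¹ : X ≃ X) x = g⁻¹ • x := rfl
          have h2 : ∀ z : X, permActionRep G X g⁻¹ u z = u (g • z) := by
            intro z
            show u (g⁻¹⁻¹ • z) = u (g • z)
            rw [inv_inv]
          rw [h1, h2, smul_inv_smul]
      _ = ⟪eL.symm (permActionRep G X g⁻¹ u), eL.symm (eL y₂)⟫_ℂ := by
          rw [hinner]
      _ = 0 := by
          rw [eL.symm_apply_apply]
          exact (Submodule.mem_orthogonal U₂ y₂).mp hy₂ _
            ⟨permActionRep G X g⁻¹ u, hU g⁻¹ ⟨u, hu, rfl⟩, rfl⟩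
  · rw [← hUeq]
    show U₂.map eL.toLinearMap ⊓ U₂ᗮ.map eL.toLinearMap = ⊥
    rw [← Submodule.map_inf eL.toLinearMap eL.injective, hcompl.inf_eq_bot, Submodule.map_bot]
  · rw [← hUeq]
    show U₂.map eL.toLinearMap ⊔ U₂ᗮ.map eL.toLinearMap = ⊤
    rw [← Submodule.map_sup, hcompl.sup_eq_top, Submodule.map_top, LinearMap.range_eq_top]
    exact eL.surjective

lemma ptab_nonempty {d k : ℕ} {P : Fin k → ℕ} (hd : ∑ i, P i = d) : Nonempty (PTab d k P) := by
  have hcard : Fintype.card (Σ i : Fin k, Fin (P i)) = Fintype.card (Fin d) := by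
    simp [hd]
  let e := Fintype.equivOfCardEq hcard
  refine ⟨⟨fun x => (e.symm x).1, fun i => ?_⟩⟩
  rw [← Fintype.card_subtype]
  have e₂ : {s : Σ j, Fin (P j) // s.1 = i} ≃ Fin (P i) :=
    { toFun := fun s => Fin.cast (congrArg P s.2) s.1.2
      invFun := fun y => ⟨⟨i, y⟩, rfl⟩
      left_inv := fun s => by
        obtain ⟨⟨j, y⟩, h⟩ := s
        subst h
        rfl
      right_inv := fun y => rfl }
  rw [Fintype.card_congr ((e.symm.subtypeEquiv fun x => Iff.rfl).trans e₂)]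
  exact Fintype.card_fin _

lemma exists_transversal {d k : ℕ} {P : Fin k → ℕ} (hP : ∀ i, 1 ≤ P i) (t : PTab d k P) :
    ∃ c : Fin k → Fin d, ∀ i, t.1 (c i) = i := by
  have h : ∀ i : Fin k, ∃ x, x ∈ Finset.univ.filter fun x => t.1 x = i := by
    intro i
    apply Finset.Nonempty.exists_mem
    rw [← Finset.card_pos, t.2 i]
    exact hP i
  choose c hc using h
  exact ⟨c, fun i => (Finset.mem_filter.mp (hc i)).2⟩

lemma part2 {d k l : ℕ} {P : Fin k → ℕ} {P' : Fin l → ℕ}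
    (hP : ∀ i, 1 ≤ P i) (hd : ∑ i, P i = d) (hlt : l < k) :
    ∃ (Wty : Type) (_ : AddCommGroup Wty) (_ : Module ℂ Wty)
      (ρW : Representation ℂ (Equiv.Perm (Fin d)) Wty),
        ρW.IsIrreducible' ∧
        (∃ ψ ∈ EqvHom ρW (indRep d k P), ψ ≠ 0) ∧
        (∀ ψ ∈ EqvHom ρW (indRep d l P'), ψ = 0) := by
  classical
  obtain ⟨t₀⟩ := ptab_nonempty hd
  obtain ⟨c, hc⟩ := exists_transversal hP t₀
  have hcinj : Function.Injective c := fun i j h => by rw [← hc i, h, hc j]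
  set cemb : Fin k ↪ Fin d := ⟨c, hcinj⟩ with hcemb
  set Φ := Equiv.Perm.viaEmbeddingHom (β := Fin d) cemb with hΦ
  set ρ := indRep d k P with hρ
  set E := altOp d cemb P with hE
  have hEapp : ∀ x : PTab d k P → ℂ,
      E x = ∑ π : Equiv.Perm (Fin k),
        ((Equiv.Perm.sign π : ℤ) : ℂ) • (ρ (Φ π) x) := by
    intro x
    rw [hE, altOp]
    simp [LinearMap.sum_apply]
    rfl
  set Inv : Submodule ℂ (PTab d k P → ℂ) → Prop := fun U => ∀ g, U.map (ρ g) ≤ U with hInv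
  set Qp : Submodule ℂ (PTab d k P → ℂ) → Prop := fun U => ∃ x ∈ U, E x ≠ 0 with hQp
  have hEmem : ∀ U, Inv U → ∀ x ∈ U, E x ∈ U := by
    intro U hU x hx
    rw [hEapp]
    exact Submodule.sum_mem _ (fun π _ => Submodule.smul_mem _ _ (hU _ ⟨x, hx, rfl⟩))
  have hQtop : Qp ⊤ := by
    refine ⟨(fun t => if t = t₀ then (1:ℂ) else 0), trivial, ?_⟩
    intro h0
    have hseed := altOp_seed d t₀ cemb hc
    rw [show altOp d cemb P = E from rfl] at hseed
    rw [h0] at hseed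
    simp at hseed
  have hex : ∃ n, ∃ U, Inv U ∧ Qp U ∧ Module.finrank ℂ U = n :=
    ⟨_, ⊤, fun g => le_top, hQtop, rfl⟩
  obtain ⟨W, hWinv, hWQ, hWrank⟩ := Nat.find_spec hex
  have hmin : ∀ U, Inv U → Qp U → ¬ (Module.finrank ℂ U < Nat.find hex) :=
    fun U h1 h2 hl => Nat.find_min hex hl ⟨U, h1, h2, rfl⟩
  have hres : ∀ g : Equiv.Perm (Fin d), ∀ x ∈ W, ρ g x ∈ W :=
    fun g x hx => hWinv g ⟨x, hx, rfl⟩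
  let ρW : Representation ℂ (Equiv.Perm (Fin d)) ↥W :=
    { toFun := fun g => (ρ g).restrict (fun x hx => hres g x hx)
      map_one' := by
        apply LinearMap.ext; intro x; apply Subtype.ext
        show ρ 1 x.1 = x.1
        rw [map_one]; rfl
      map_mul' := fun g h => by
        apply LinearMap.ext; intro x; apply Subtype.ext
        show ρ (g * h) x.1 = ρ g (ρ h x.1)
        rw [map_mul]; rfl }
  have hρWcoe : ∀ (g : Equiv.Perm (Fin d)) (x : ↥W), (ρW g x).1 = ρ g x.1 := fun g x => rfl
  have hWne : W ≠ ⊥ := by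
    obtain ⟨x, hx, hEx⟩ := hWQ
    intro h
    rw [h, Submodule.mem_bot] at hx
    exact hEx (by rw [hx, map_zero])
  have hirr : ρW.IsIrreducible' := by
    constructor
    · exact Submodule.nontrivial_iff_ne_bot.mpr hWne
    · intro U hUinv
      by_contra hcon
      push_neg at hcon
      obtain ⟨hUbot, hUtop⟩ := hcon
      set U' := U.map W.subtype with hU'
      have hU'le : U' ≤ W := Submodule.map_subtype_le W U
      have hU'inv : Inv U' := by
        intro g
        rintro _ ⟨x, hx, rfl⟩
        obtain ⟨u, hu, rfl⟩ := hx
        exact ⟨ρW g u, hUinv g ⟨u, hu, rfl⟩, rfl⟩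
      have hU'nebot : U' ≠ ⊥ := by
        intro h
        apply hUbot
        apply Submodule.map_injective_of_injective (Submodule.injective_subtype W)
        rw [← hU', h, Submodule.map_bot]
      have hU'ne : U' ≠ W := by
        intro h
        apply hUtop
        apply Submodule.map_injective_of_injective (Submodule.injective_subtype W)
        rw [Submodule.map_top, Submodule.range_subtype, ← hU', h]
      obtain ⟨K, hKinv, hKinf, hKsup⟩ :=
        orth_compl (Equiv.Perm (Fin d)) (PTab d k P) U' hU'inv
      set K' := K ⊓ W with hK'
      have hK'inv : Inv K' := by
        intro g
        exact le_trans (Submodule.map_inf_le _) (inf_le_inf (hKinv g) (hWinv g))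
      have hWsup : W = U' ⊔ K' := by
        have h1 : (U' ⊔ K) ⊓ W = U' ⊔ (K ⊓ W) := sup_inf_assoc_of_le K hU'le
        rw [hK', ← h1, hKsup, top_inf_eq]
      have hEU' : ∀ x ∈ U', E x = 0 := by
        by_contra hcon2
        push_neg at hcon2
        obtain ⟨x, hx, hEx⟩ := hcon2
        apply hmin U' hU'inv ⟨x, hx, hEx⟩
        rw [← hWrank]
        exact Submodule.finrank_lt_finrank_of_lt (lt_of_le_of_ne hU'le hU'ne)
      have hK'ne : K' ≠ W := by
        intro h
        apply hU'nebot
        have h2 : U' ≤ K := le_trans (h ▸ hU'le) inf_le_left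
        have h3 : U' ≤ U' ⊓ K := le_inf le_rfl h2
        rw [hKinf] at h3
        exact le_bot_iff.mp h3
      have hEK' : ∀ x ∈ K', E x = 0 := by
        by_contra hcon2
        push_neg at hcon2
        obtain ⟨x, hx, hEx⟩ := hcon2
        apply hmin K' hK'inv ⟨x, hx, hEx⟩
        rw [← hWrank]
        exact Submodule.finrank_lt_finrank_of_lt (lt_of_le_of_ne inf_le_right hK'ne)
      obtain ⟨x, hx, hEx⟩ := hWQ
      rw [hWsup] at hx
      obtain ⟨u, hu, v, hv, rfl⟩ := Submodule.mem_sup.mp hx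
      apply hEx
      rw [map_add, hEU' u hu, hEK' v hv, add_zero]
  refine ⟨↥W, inferInstance, inferInstance, ρW, hirr, ?_, ?_⟩
  · refine ⟨W.subtype, fun g => rfl, ?_⟩
    intro h
    obtain ⟨x, hx, hEx⟩ := hWQ
    have hxne : x ≠ 0 := fun h0 => hEx (by rw [h0, map_zero])
    exact hxne (LinearMap.congr_fun h ⟨x, hx⟩)
  · intro ψ hψ
    obtain ⟨x₀, hx₀, hEx₀⟩ := hWQ
    set w₀ : ↥W := ⟨x₀, hx₀⟩ with hw₀
    set w₁ : ↥W := ⟨E x₀, hEmem W hWinv x₀ hx₀⟩ with hw₁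
    have hψw₁ : ψ w₁ = 0 := by
      have hdec : w₁ = ∑ π : Equiv.Perm (Fin k),
          ((Equiv.Perm.sign π : ℤ) : ℂ) • (ρW (Φ π) w₀) := by
        apply Subtype.ext
        rw [AddSubmonoidClass.coe_finset_sum]
        show E x₀ = _
        rw [hEapp]
        rfl
      rw [hdec, map_sum]
      have hterm : ∀ π : Equiv.Perm (Fin k),
          ψ (((Equiv.Perm.sign π : ℤ) : ℂ) • ρW (Φ π) w₀)
            = ((Equiv.Perm.sign π : ℤ) : ℂ) • (indRep d l P' (Φ π) (ψ w₀)) := by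
        intro π
        rw [map_smul]
        congr 1
        have := LinearMap.congr_fun (hψ (Φ π)) w₀
        simpa using this
      rw [Finset.sum_congr rfl fun π _ => hterm π]
      have h0 := altOp_vanish d cemb P' hlt (ψ w₀)
      calc ∑ π : Equiv.Perm (Fin k),
            ((Equiv.Perm.sign π : ℤ) : ℂ) • (indRep d l P' (Φ π) (ψ w₀))
          = altOp d cemb P' (ψ w₀) := by
            rw [altOp]
            simp [LinearMap.sum_apply]
            rfl
        _ = 0 := h0
    have hw₁ne : w₁ ≠ 0 := fun h => hEx₀ (congrArg Subtype.val h)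
    have hker : ∀ g, (LinearMap.ker ψ).map (ρW g) ≤ LinearMap.ker ψ := by
      intro g
      rintro _ ⟨z, hz, rfl⟩
      rw [LinearMap.mem_ker]
      have h1 := LinearMap.congr_fun (hψ g) z
      simp only [LinearMap.comp_apply] at h1
      rw [h1, LinearMap.mem_ker.mp hz, map_zero]
    rcases hirr.2 (LinearMap.ker ψ) hker with h | h
    · exfalso
      have hmem : w₁ ∈ LinearMap.ker ψ := LinearMap.mem_ker.mpr hψw₁
      rw [h, Submodule.mem_bot] at hmem
      exact hw₁ne hmem
    · exact LinearMap.ker_eq_top.mp h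

lemma grouped_card {d k l : ℕ} {P : Fin k → ℕ} (g : Fin k → Fin l) (t : PTab d k P) (j : Fin l) :
    (Finset.univ.filter fun x => g (t.1 x) = j).card
      = ∑ i ∈ Finset.univ.filter (fun i => g i = j), P i := by
  have hset : (Finset.univ.filter fun x => g (t.1 x) = j)
      = (Finset.univ.filter (fun i => g i = j)).biUnion
          (fun i => Finset.univ.filter fun x => t.1 x = i) := by
    ext x
    simp only [Finset.mem_filter, Finset.mem_univ, true_and, Finset.mem_biUnion]
    constructor
    · intro h; exact ⟨t.1 x, h, rfl⟩
    · rintro ⟨i, hi, hx⟩; rw [hx]; exact hi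
  rw [hset, Finset.card_biUnion]
  · exact Finset.sum_congr rfl fun i _ => t.2 i
  · intro i₁ _ i₂ _ hne
    refine Finset.disjoint_left.mpr ?_
    intro x hx1 hx2
    simp only [Finset.mem_filter, Finset.mem_univ, true_and] at hx1 hx2
    exact hne (hx1 ▸ hx2 ▸ rfl)

lemma part1 {d k l : ℕ} {P : Fin k → ℕ} {P' : Fin l → ℕ}
    (hd : ∑ i, P i = d) (g : Fin k → Fin l)
    (hg : ∀ j, P' j = ∑ i ∈ Finset.univ.filter (fun i => g i = j), P i) :
    ∃ φ ∈ EqvHom (indRep d l P') (indRep d k P), φ ≠ 0 := by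
  obtain ⟨t₀⟩ := ptab_nonempty hd
  let p : PTab d k P → PTab d l P' :=
    fun t => ⟨g ∘ t.1, fun j => (grouped_card g t j).trans (hg j).symm⟩
  refine ⟨LinearMap.funLeft ℂ ℂ p, ?_, ?_⟩
  · intro σ
    apply LinearMap.ext; intro u; funext t
    show (indRep d l P' σ u) (p t) = u (p (σ⁻¹ • t))
    have hcomm : p (σ⁻¹ • t) = σ⁻¹ • p t := Subtype.ext rfl
    rw [hcomm]
    rfl
  · intro h
    have h1 := congrFun (LinearMap.congr_fun h (fun _ => (1:ℂ))) t₀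
    simp at h1

end S15

/-- Let `P, P'` be partitions of `d` with `P` a strict refinement of `P'`
(`P < P'`). Then `dim Hom_{S_d}(Ind_{S_{P'}}^{S_d} 1, Ind_{S_P}^{S_d} 1) ≥ 1` (there is a
nonzero equivariant map), and there is an irreducible representation of `S_d` that occurs in
`Ind_{S_P}^{S_d} 1` but not in `Ind_{S_{P'}}^{S_d} 1`. -/
theorem stmt15 (d k l : ℕ) (P : Fin k → ℕ) (P' : Fin l → ℕ)
    (hP : ∀ i, 1 ≤ P i) (hPmono : Antitone P) (hP'mono : Antitone P')
    (hd : ∑ i, P i = d) (hd' : ∑ j, P' j = d)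
    (href : IsStrictRefinement P P') :
    (∃ φ ∈ EqvHom (indRep d l P') (indRep d k P), φ ≠ 0) ∧
    ∃ (Wty : Type) (_ : AddCommGroup Wty) (_ : Module ℂ Wty)
      (ρW : Representation ℂ (Equiv.Perm (Fin d)) Wty),
        ρW.IsIrreducible' ∧
        (∃ ψ ∈ EqvHom ρW (indRep d k P), ψ ≠ 0) ∧
        (∀ ψ ∈ EqvHom ρW (indRep d l P'), ψ = 0) := by
  obtain ⟨hlt, g, hg⟩ := href
  exact ⟨S15.part1 hd g hg, S15.part2 hP hd hlt⟩
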